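/- Let H' = -∑_{i=1}^{L-1} (Jᵢ σᵢ^z σ_{i+1}^z + hᵢ σᵢ^x) act on L qubits (note: no field term on site L). Then for every natural number n, the partial trace of H'^n over sites 1,…,L-1 is a scalar multiple of the identity on site L. -/
import Mathlib
set_option linter.unusedSectionVars false

open Matrix Complex

noncomputable section

/-- Pauli X matrix. -/
def σx : Matrix (Fin 2) (Fin 2) ℂ := !![0, 1; 1, 0]
/-- Pauli Y matrix. -/
def σy : Matrix (Fin 2) (Fin 2) ℂ := !![0, -Complex.I; Complex.I, 0]
/-- Pauli Z matrix. -/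
def σz : Matrix (Fin 2) (Fin 2) ℂ := !![1, 0; 0, -1]

/-- The one-site operator `P` acting on site `i` of a collection of qubits
indexed by `ι` (identity on all other sites). -/
def pauliAt {ι : Type} [Fintype ι] [DecidableEq ι] (i : ι)
    (P : Matrix (Fin 2) (Fin 2) ℂ) : Matrix (ι → Fin 2) (ι → Fin 2) ℂ :=
  fun v w => if ∀ j, j ≠ i → v j = w j then P (v i) (w i) else 0

/-- The tensor product `⨂ i, η i` of one-qubit operators, as a matrix on the
full Hilbert space of the qubits indexed by `ι`. -/
def tensorPauli {ι : Type} [Fintype ι] [DecidableEq ι]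
    (η : ι → Matrix (Fin 2) (Fin 2) ℂ) : Matrix (ι → Fin 2) (ι → Fin 2) ℂ :=
  fun v w => ∏ i, η i (v i) (w i)

/-- Partial trace over the sites satisfying `p`; the result is an operator on
the qubits at the remaining sites. -/
def traceOut {ι : Type} [Fintype ι] [DecidableEq ι] (p : ι → Prop) [DecidablePred p]
    (M : Matrix (ι → Fin 2) (ι → Fin 2) ℂ) :
    Matrix ({i // ¬ p i} → Fin 2) ({i // ¬ p i} → Fin 2) ℂ :=
  fun v w => ∑ u : {i : ι // p i} → Fin 2,
    M (fun i => if h : p i then u ⟨i, h⟩ else v ⟨i, h⟩)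
      (fun i => if h : p i then u ⟨i, h⟩ else w ⟨i, h⟩)

/-- The Hamiltonian `H' = -∑_{i=1}^{L-1} (Jᵢ σᵢ^z σ_{i+1}^z + hᵢ σᵢ^x)` on a
chain of `L + 1` qubits (sites `0, …, L`, with no field term on the last site). -/
def Hprime (L : ℕ) (J h : Fin L → ℝ) :
    Matrix (Fin (L + 1) → Fin 2) (Fin (L + 1) → Fin 2) ℂ :=
  -∑ i : Fin L, ((J i : ℂ) • (pauliAt i.castSucc σz * pauliAt i.succ σz)
      + (h i : ℂ) • pauliAt i.castSucc σx)

/-! ### Auxiliary lemmas -/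

lemma σz_ne (a b : Fin 2) (h : a ≠ b) : σz a b = 0 := by
  fin_cases a <;> fin_cases b <;> simp_all [σz]

lemma σz_flip (a b : Fin 2) : σz (a + 1) (b + 1) = - σz a b := by
  fin_cases a <;> fin_cases b <;> norm_num [σz] <;> rfl

lemma σx_flip (a b : Fin 2) : σx (a + 1) (b + 1) = σx a b := by
  fin_cases a <;> fin_cases b <;> norm_num [σx] <;> rfl

lemma fin2_add_one_inj {a b : Fin 2} : a + 1 = b + 1 ↔ a = b := by
  revert a b; decide

lemma fin2_add_one_add_one (a : Fin 2) : a + 1 + 1 = a := by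
  revert a; decide

/-- Global spin flip. -/
def flipv {ι : Type} (v : ι → Fin 2) : ι → Fin 2 := fun i => v i + 1

lemma flipv_flipv {ι : Type} (v : ι → Fin 2) : flipv (flipv v) = v := by
  funext i; exact fin2_add_one_add_one (v i)

/-- Global spin flip as an equivalence. -/
def flipe (ι : Type) : (ι → Fin 2) ≃ (ι → Fin 2) :=
  ⟨flipv, flipv, flipv_flipv, flipv_flipv⟩

lemma flipv_inj {ι : Type} {v w : ι → Fin 2} : flipv v = flipv w ↔ v = w :=
  (flipe ι).injective.eq_iff

section props
variable {ι : Type} [Fintype ι] [DecidableEq ι]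

/-- `M` is diagonal in the coordinate `ℓ`. -/
def DiagAt (ℓ : ι) (M : Matrix (ι → Fin 2) (ι → Fin 2) ℂ) : Prop :=
  ∀ v w, v ℓ ≠ w ℓ → M v w = 0

/-- `M` is invariant under the global spin flip. -/
def FlipInv (M : Matrix (ι → Fin 2) (ι → Fin 2) ℂ) : Prop :=
  ∀ v w, M (flipv v) (flipv w) = M v w

/-- `M` is anti-invariant under the global spin flip. -/
def FlipAnti (M : Matrix (ι → Fin 2) (ι → Fin 2) ℂ) : Prop :=
  ∀ v w, M (flipv v) (flipv w) = - M v w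

lemma diagAt_one (ℓ : ι) : DiagAt ℓ (1 : Matrix (ι → Fin 2) (ι → Fin 2) ℂ) := by
  intro v w hvw
  exact Matrix.one_apply_ne (fun h => hvw (by rw [h]))

lemma flipInv_one : FlipInv (1 : Matrix (ι → Fin 2) (ι → Fin 2) ℂ) := by
  intro v w
  simp [Matrix.one_apply, flipv_inj]

lemma diagAt_mul {ℓ : ι} {A B : Matrix (ι → Fin 2) (ι → Fin 2) ℂ}
    (hA : DiagAt ℓ A) (hB : DiagAt ℓ B) : DiagAt ℓ (A * B) := by
  intro v w hvw
  rw [Matrix.mul_apply]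
  refine Finset.sum_eq_zero fun u _ => ?_
  by_cases hu : u ℓ = w ℓ
  · rw [hA v u (fun h => hvw (h.trans hu)), zero_mul]
  · rw [hB u w hu, mul_zero]

lemma flipInv_mul {A B : Matrix (ι → Fin 2) (ι → Fin 2) ℂ}
    (hA : FlipInv A) (hB : FlipInv B) : FlipInv (A * B) := by
  intro v w
  rw [Matrix.mul_apply, Matrix.mul_apply]
  rw [← Equiv.sum_comp (flipe ι)]
  exact Finset.sum_congr rfl fun u _ => by
    show A (flipv v) (flipv u) * B (flipv u) (flipv w) = _
    rw [hA, hB]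

lemma flipInv_mul_anti {A B : Matrix (ι → Fin 2) (ι → Fin 2) ℂ}
    (hA : FlipAnti A) (hB : FlipAnti B) : FlipInv (A * B) := by
  intro v w
  rw [Matrix.mul_apply, Matrix.mul_apply]
  rw [← Equiv.sum_comp (flipe ι)]
  exact Finset.sum_congr rfl fun u _ => by
    show A (flipv v) (flipv u) * B (flipv u) (flipv w) = _
    rw [hA, hB]; ring

lemma diagAt_sum {ℓ : ι} {s : Finset (Fin L')} {f : Fin L' → Matrix (ι → Fin 2) (ι → Fin 2) ℂ}
    (hf : ∀ i ∈ s, DiagAt ℓ (f i)) : DiagAt ℓ (∑ i ∈ s, f i) := by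
  intro v w hvw
  rw [Matrix.sum_apply]
  exact Finset.sum_eq_zero fun i hi => hf i hi v w hvw

lemma flipInv_sum {s : Finset (Fin L')} {f : Fin L' → Matrix (ι → Fin 2) (ι → Fin 2) ℂ}
    (hf : ∀ i ∈ s, FlipInv (f i)) : FlipInv (∑ i ∈ s, f i) := by
  intro v w
  rw [Matrix.sum_apply, Matrix.sum_apply]
  exact Finset.sum_congr rfl fun i hi => hf i hi v w

lemma diagAt_neg {ℓ : ι} {A : Matrix (ι → Fin 2) (ι → Fin 2) ℂ} (hA : DiagAt ℓ A) :
    DiagAt ℓ (-A) := fun v w hvw => by simp [hA v w hvw]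

lemma flipInv_neg {A : Matrix (ι → Fin 2) (ι → Fin 2) ℂ} (hA : FlipInv A) :
    FlipInv (-A) := fun v w => by simp [hA v w]

lemma diagAt_add {ℓ : ι} {A B : Matrix (ι → Fin 2) (ι → Fin 2) ℂ}
    (hA : DiagAt ℓ A) (hB : DiagAt ℓ B) : DiagAt ℓ (A + B) :=
  fun v w hvw => by simp [Matrix.add_apply, hA v w hvw, hB v w hvw]

lemma flipInv_add {A B : Matrix (ι → Fin 2) (ι → Fin 2) ℂ}
    (hA : FlipInv A) (hB : FlipInv B) : FlipInv (A + B) :=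
  fun v w => by simp [Matrix.add_apply, hA v w, hB v w]

lemma diagAt_smul {ℓ : ι} {c : ℂ} {A : Matrix (ι → Fin 2) (ι → Fin 2) ℂ}
    (hA : DiagAt ℓ A) : DiagAt ℓ (c • A) :=
  fun v w hvw => by simp [hA v w hvw]

lemma flipInv_smul {c : ℂ} {A : Matrix (ι → Fin 2) (ι → Fin 2) ℂ}
    (hA : FlipInv A) : FlipInv (c • A) :=
  fun v w => by simp [Matrix.smul_apply, hA v w]

lemma diagAt_pauliAt_σz (ℓ j : ι) : DiagAt ℓ (pauliAt j σz) := by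
  intro v w hvw
  unfold pauliAt
  split
  · rename_i hcond
    by_cases hj : ℓ = j
    · subst hj; exact σz_ne _ _ hvw
    · exact absurd (hcond ℓ hj) hvw
  · rfl

lemma diagAt_pauliAt_ne (ℓ j : ι) (hj : ℓ ≠ j) (P : Matrix (Fin 2) (Fin 2) ℂ) :
    DiagAt ℓ (pauliAt j P) := by
  intro v w hvw
  unfold pauliAt
  split
  · rename_i hcond; exact absurd (hcond ℓ hj) hvw
  · rfl

lemma pauliAt_cond_flip (j : ι) {v w : ι → Fin 2} :
    (∀ k, k ≠ j → flipv v k = flipv w k) ↔ (∀ k, k ≠ j → v k = w k) := by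
  constructor <;> intro h k hk
  · exact fin2_add_one_inj.mp (h k hk)
  · exact fin2_add_one_inj.mpr (h k hk)

lemma flipAnti_pauliAt_σz (j : ι) : FlipAnti (pauliAt j σz) := by
  intro v w
  unfold pauliAt
  by_cases hcond : ∀ k, k ≠ j → v k = w k
  · rw [if_pos hcond, if_pos ((pauliAt_cond_flip j).mpr hcond)]
    exact σz_flip _ _
  · rw [if_neg hcond, if_neg (fun h => hcond ((pauliAt_cond_flip j).mp h))]
    simp

lemma flipInv_pauliAt_σx (j : ι) : FlipInv (pauliAt j σx) := by
  intro v w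
  unfold pauliAt
  by_cases hcond : ∀ k, k ≠ j → v k = w k
  · rw [if_pos hcond, if_pos ((pauliAt_cond_flip j).mpr hcond)]
    exact σx_flip _ _
  · rw [if_neg hcond, if_neg (fun h => hcond ((pauliAt_cond_flip j).mp h))]

end props

lemma diagAt_Hprime (L : ℕ) (J h : Fin L → ℝ) :
    DiagAt (Fin.last L) (Hprime L J h) := by
  unfold Hprime
  apply diagAt_neg
  apply diagAt_sum
  intro i _
  apply diagAt_add
  · apply diagAt_smul
    exact diagAt_mul (diagAt_pauliAt_σz _ _) (diagAt_pauliAt_σz _ _)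
  · apply diagAt_smul
    exact diagAt_pauliAt_ne _ _ (Fin.castSucc_lt_last i).ne' σx

lemma flipInv_Hprime (L : ℕ) (J h : Fin L → ℝ) : FlipInv (Hprime L J h) := by
  unfold Hprime
  apply flipInv_neg
  apply flipInv_sum
  intro i _
  apply flipInv_add
  · apply flipInv_smul
    exact flipInv_mul_anti (flipAnti_pauliAt_σz _) (flipAnti_pauliAt_σz _)
  · apply flipInv_smul
    exact flipInv_pauliAt_σx _

lemma diagAt_Hprime_pow (L : ℕ) (J h : Fin L → ℝ) (n : ℕ) :
    DiagAt (Fin.last L) ((Hprime L J h) ^ n) := by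
  induction n with
  | zero => rw [pow_zero]; exact diagAt_one _
  | succ n ih => rw [pow_succ]; exact diagAt_mul ih (diagAt_Hprime L J h)

lemma flipInv_Hprime_pow (L : ℕ) (J h : Fin L → ℝ) (n : ℕ) :
    FlipInv ((Hprime L J h) ^ n) := by
  induction n with
  | zero => rw [pow_zero]; exact flipInv_one
  | succ n ih => rw [pow_succ]; exact flipInv_mul ih (flipInv_Hprime L J h)

instance (L : ℕ) : Subsingleton {i : Fin (L + 1) // ¬ i ≠ Fin.last L} :=
  ⟨fun a b => Subtype.ext ((not_ne_iff.mp a.2).trans (not_ne_iff.mp b.2).symm)⟩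

theorem traceOut_pow_Hprime_smul_one (L : ℕ) (J h : Fin L → ℝ) (n : ℕ) :
    ∃ c : ℂ, traceOut (fun i : Fin (L + 1) => i ≠ Fin.last L) ((Hprime L J h) ^ n) =
      c • (1 : Matrix ({i : Fin (L + 1) // ¬ i ≠ Fin.last L} → Fin 2)
        ({i : Fin (L + 1) // ¬ i ≠ Fin.last L} → Fin 2) ℂ) := by
  set M := (Hprime L J h) ^ n with hM
  have hd : DiagAt (Fin.last L) M := diagAt_Hprime_pow L J h n
  have hf : FlipInv M := flipInv_Hprime_pow L J h n
  set p : Fin (L + 1) → Prop := fun i => i ≠ Fin.last L with hp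
  have hpl : ¬ p (Fin.last L) := by simp [hp]
  set e : {i : Fin (L + 1) // ¬ p i} := ⟨Fin.last L, hpl⟩ with he
  -- the traceOut is flip-invariant
  have key_flip : ∀ v w, traceOut p M (flipv v) (flipv w) = traceOut p M v w := by
    intro v w
    unfold traceOut
    rw [← Equiv.sum_comp (flipe {i : Fin (L+1) // p i})]
    refine Finset.sum_congr rfl fun u _ => ?_
    show M (fun i => if h : p i then flipv u ⟨i, h⟩ else flipv v ⟨i, h⟩)
        (fun i => if h : p i then flipv u ⟨i, h⟩ else flipv w ⟨i, h⟩) = _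
    rw [← hf]
    congr 1 <;> funext i <;> simp only [flipv] <;> split <;> simp [fin2_add_one_add_one]
  -- off-diagonal entries vanish
  have key_diag : ∀ v w, v ≠ w → traceOut p M v w = 0 := by
    intro v w hvw
    have hev : v e ≠ w e := by
      intro hvwe
      apply hvw
      funext j
      rw [Subsingleton.elim j e, hvwe]
    unfold traceOut
    refine Finset.sum_eq_zero fun u _ => ?_
    apply hd
    simp only [dif_neg hpl]
    exact hev
  refine ⟨traceOut p M (fun _ => 0) (fun _ => 0), ?_⟩
  funext v w
  rw [Matrix.smul_apply, Matrix.one_apply]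
  by_cases hvw : v = w
  · subst hvw
    rw [if_pos rfl, smul_eq_mul, mul_one]
    by_cases hv : v e = 0
    · have : v = fun _ => 0 := by
        funext j; rw [Subsingleton.elim j e]; exact hv
      rw [this]
    · have hv1 : v e = 1 := by omega
      have : v = flipv (fun _ => 0) := by
        funext j; rw [Subsingleton.elim j e]; rw [hv1]; rfl
      rw [this, key_flip]
  · rw [if_neg hvw, smul_zero]
    exact key_diag v w hvw
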